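/- Let Z be a principal ideal domain with fraction field Q. Let P_1,...,P_s ∈ Z[y] (s ≥ 2) be nonzero polynomials with no common divisor in Q[y], and assume no prime p of Z divides all of P_1(m),...,P_s(m) for every m ∈ Z. Then there exists m ∈ Z such that P_1(m),...,P_s(m) have no common divisor in Z other than units. -/

import Mathlib

open Polynomial

theorem stmt_4 {Z : Type*} [CommRing Z] [IsDomain Z] [IsPrincipalIdealRing Z]
    (s : ℕ) (hs : 2 ≤ s) (P : Fin s → Polynomial Z)
    (hP0 : ∀ i, P i ≠ 0)
    (hcop : ∀ d : Polynomial (FractionRing Z),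
      (∀ i, d ∣ (P i).map (algebraMap Z (FractionRing Z))) → IsUnit d)
    (hAV2 : ∀ p : Z, Prime p → ∃ m : Z, ∃ i, ¬ p ∣ (P i).eval m) :
    ∃ m : Z, ∀ d : Z, (∀ i, d ∣ (P i).eval m) → IsUnit d := by
  classical
  set Q := FractionRing Z
  have hinj : Function.Injective (algebraMap Z Q) := IsFractionRing.injective Z Q
  -- Step 1 : Bezout identity over Q[X]
  obtain ⟨a, ha⟩ : ∃ a : Fin s → Polynomial Q,
      ∑ i, a i * (P i).map (algebraMap Z Q) = 1 := by
    rw [← Ideal.mem_span_range_iff_exists_fun]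
    set I : Ideal (Polynomial Q) :=
      Ideal.span (Set.range fun i => (P i).map (algebraMap Z Q)) with hIdef
    obtain ⟨g, hg⟩ := (IsPrincipalIdealRing.principal I).principal
    have hdvd : ∀ i, g ∣ (P i).map (algebraMap Z Q) := fun i => by
      rw [← Ideal.mem_span_singleton]
      have : (P i).map (algebraMap Z Q) ∈ I := Ideal.subset_span ⟨i, rfl⟩
      rwa [hg] at this
    have hgu : IsUnit g := hcop g hdvd
    have hItop : I = ⊤ := by
      rw [hg]
      exact Ideal.span_singleton_eq_top.mpr hgu
    rw [hItop]
    exact Submodule.mem_top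
  -- integer normalization
  choose b hb using fun i =>
    IsLocalization.integerNormalization_map_to_map (nonZeroDivisors Z) (a i)
  set q : Fin s → Polynomial Z :=
    fun i => IsLocalization.integerNormalization (nonZeroDivisors Z) (a i) with hq
  set c : Z := ∏ i, (b i : Z) with hc
  have hc0 : c ≠ 0 := by
    rw [hc]
    exact Finset.prod_ne_zero_iff.mpr fun i _ => nonZeroDivisors.coe_ne_zero (b i)
  set F : Polynomial Z :=
    ∑ i, q i * C (∏ j ∈ Finset.univ.erase i, (b j : Z)) * P i with hF
  have hFC : F = C c := by
    apply Polynomial.map_injective _ hinj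
    rw [hF]
    rw [Polynomial.map_sum, Polynomial.map_C]
    have : ∀ i : Fin s, ((q i * C (∏ j ∈ Finset.univ.erase i, (b j : Z)) * P i).map
        (algebraMap Z Q)) = C (algebraMap Z Q c) * (a i * (P i).map (algebraMap Z Q)) := by
      intro i
      rw [Polynomial.map_mul, Polynomial.map_mul, Polynomial.map_C, hb i,
        ← IsScalarTower.algebraMap_smul Q ((b i : Z)) (a i), Polynomial.smul_eq_C_mul]
      rw [← Finset.mul_prod_erase Finset.univ (fun j => (b j : Z)) (Finset.mem_univ i)] at hc
      rw [hc]
      push_cast [map_mul, map_prod]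
      ring
    rw [Finset.sum_congr rfl fun i _ => this i, ← Finset.mul_sum, ha, mul_one]
  -- every common divisor of the values divides c
  have hdvdc : ∀ m : Z, ∀ d : Z, (∀ i, d ∣ (P i).eval m) → d ∣ c := by
    intro m d hd
    have : c = ∑ i, (q i).eval m * (∏ j ∈ Finset.univ.erase i, (b j : Z)) * (P i).eval m := by
      conv_lhs => rw [← Polynomial.eval_C (a := c) (x := m), ← hFC]
      simp [hF, Polynomial.eval_finset_sum, Polynomial.eval_prod, mul_assoc]
    rw [this]
    exact Finset.dvd_sum fun i _ => (hd i).mul_left _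
  -- Step 2 : factor c and use CRT
  obtain ⟨f, hfp, hfc⟩ := UniqueFactorizationMonoid.exists_prime_factors c hc0
  set T : Finset (Ideal Z) := f.toFinset.image (fun p => Ideal.span {p}) with hT
  have hTgen : ∀ I : T, ∃ p : Z, Prime p ∧ (I : Ideal Z) = Ideal.span {p} := by
    rintro ⟨I, hI⟩
    rw [hT, Finset.mem_image] at hI
    obtain ⟨p, hp, rfl⟩ := hI
    exact ⟨p, hfp p (Multiset.mem_toFinset.mp hp), rfl⟩
  choose gp hgpprime hgpspan using hTgen
  choose mI iI hmI using fun I : T => hAV2 _ (hgpprime I)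
  have hmax : ∀ I : T, (I : Ideal Z).IsMaximal := fun I => by
    rw [hgpspan I]
    exact PrincipalIdealRing.isMaximal_of_irreducible (hgpprime I).irreducible
  have hcopI : Pairwise (Function.onFun IsCoprime fun I : T => (I : Ideal Z)) := by
    intro i j hij
    rw [Function.onFun, Ideal.isCoprime_iff_sup_eq]
    exact (hmax i).coprime_of_ne (hmax j) (fun h => hij (Subtype.ext h))
  obtain ⟨y, hy⟩ := Ideal.quotientInfToPiQuotient_surj hcopI
    (fun I : T => Ideal.Quotient.mk _ (mI I))
  obtain ⟨m, rfl⟩ := Ideal.Quotient.mk_surjective y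
  have hmod : ∀ I : T, m - mI I ∈ (I : Ideal Z) := by
    intro I
    have := congrFun hy I
    rw [Ideal.quotientInfToPiQuotient_mk'] at this
    exact Ideal.Quotient.eq.mp this
  refine ⟨m, fun d hd => ?_⟩
  by_contra hdu
  have hdc : d ∣ c := hdvdc m d hd
  have hd0 : d ≠ 0 := fun h => hc0 (zero_dvd_iff.mp (h ▸ hdc))
  obtain ⟨fd, hfdp, hfdc⟩ := UniqueFactorizationMonoid.exists_prime_factors d hd0
  have hfdne : fd ≠ 0 := by
    rintro rfl
    exact hdu (hfdc.isUnit (by simp))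
  obtain ⟨p, hpfd⟩ := Multiset.exists_mem_of_ne_zero hfdne
  have hpprime : Prime p := hfdp p hpfd
  have hpd : p ∣ d := (Multiset.dvd_prod hpfd).trans hfdc.dvd
  -- p divides c, hence associated to some prime factor r of c
  have hpc : p ∣ f.prod := (hpd.trans hdc).trans hfc.symm.dvd
  obtain ⟨r, hrf, hpr⟩ := hpprime.exists_mem_multiset_dvd hpc
  have hrI : Ideal.span {r} ∈ T :=
    Finset.mem_image.mpr ⟨r, Multiset.mem_toFinset.mpr hrf, rfl⟩
  set I : T := ⟨Ideal.span {r}, hrI⟩ with hIdef2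
  have hpr' : Associated p r := hpprime.associated_of_dvd (hfp r hrf) hpr
  have hgpr : Associated (gp I) r :=
    Ideal.span_singleton_eq_span_singleton.mp (hgpspan I).symm
  have hgpp : Associated (gp I) p := hgpr.trans hpr'.symm
  have hsub : gp I ∣ m - mI I := by
    have h := hmod I
    rw [hgpspan I, Ideal.mem_span_singleton] at h
    exact h
  have hfinal : gp I ∣ (P (iI I)).eval (mI I) := by
    have h1 : gp I ∣ (P (iI I)).eval m := hgpp.dvd.trans (hpd.trans (hd (iI I)))
    have h2 : gp I ∣ (P (iI I)).eval m - (P (iI I)).eval (mI I) :=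
      hsub.trans (Polynomial.sub_dvd_eval_sub m (mI I) (P (iI I)))
    have := dvd_sub h1 h2
    simpa using this
  exact hmI I hfinal
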